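/- For a finite-dimensional vector space $A$ of dimension $a$ and an endomorphism $f$ of $A$, the induced endomorphism $S^k f$ of the symmetric power $S^k A$ satisfies $\det(S^k f) = (\det f)^{\binom{a+k-1}{a}}$. -/

import Mathlib

open scoped BigOperators

/-- The monomial multi-index attached to an element of `Sym (Fin a) k`
(the monomial basis of the `k`-th symmetric power of `ℂ^a`). -/
noncomputable def symExp {a k : ℕ} (s : Sym (Fin a) k) : Fin a →₀ ℕ := Multiset.toFinsupp s.1

/-- The matrix (in the monomial basis of `S^k(ℂ^a)`) of the `k`-th symmetric power of
the endomorphism of `ℂ^a` given by the matrix `M`: symmetric powers are realized as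
homogeneous polynomials of degree `k`, and `S^k M` acts by the linear substitution
`Xᵢ ↦ ∑ⱼ Mᵢⱼ Xⱼ`. -/
noncomputable def symPowMatrix (a k : ℕ) (M : Matrix (Fin a) (Fin a) ℂ) :
    Matrix (Sym (Fin a) k) (Sym (Fin a) k) ℂ := fun d c =>
  MvPolynomial.coeff (symExp d)
    ((MvPolynomial.aeval fun i : Fin a => ∑ j : Fin a, M i j • (MvPolynomial.X j :
        MvPolynomial (Fin a) ℂ)) (MvPolynomial.monomial (symExp c) 1))

section SymPowAux
open MvPolynomial

variable {a k : ℕ}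

noncomputable def LF (M : Matrix (Fin a) (Fin a) ℂ) (i : Fin a) : MvPolynomial (Fin a) ℂ :=
  ∑ j : Fin a, M i j • X j

lemma toFinsupp_cons' (i : Fin a) (s : Multiset (Fin a)) :
    Multiset.toFinsupp (i ::ₘ s) = Finsupp.single i 1 + Multiset.toFinsupp s := by
  rw [← Multiset.singleton_add, map_add, Multiset.toFinsupp_singleton]

lemma aeval_monomial_eq (M : Matrix (Fin a) (Fin a) ℂ) (s : Multiset (Fin a)) :
    (MvPolynomial.aeval fun i : Fin a => ∑ j : Fin a, M i j • (X j : MvPolynomial (Fin a) ℂ))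
      (monomial (Multiset.toFinsupp s) 1) = (s.map (LF M)).prod := by
  induction s using Multiset.induction with
  | empty => simp
  | cons i s ih =>
    rw [toFinsupp_cons', monomial_single_add, pow_one, map_mul, aeval_X,
      Multiset.map_cons, Multiset.prod_cons, ih, LF]

/-- weight of a multi-index -/
def Wt (b : Fin a → ℕ) (e : Fin a →₀ ℕ) : ℕ := e.sum fun i n => n * b i

lemma Wt_add (b : Fin a → ℕ) (f g : Fin a →₀ ℕ) : Wt b (f + g) = Wt b f + Wt b g :=
  Finsupp.sum_add_index' (by simp) (by intros; rw [add_mul])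

lemma Wt_single (b : Fin a → ℕ) (j : Fin a) : Wt b (Finsupp.single j 1) = b j := by
  simp [Wt, Finsupp.sum_single_index]

lemma degSum_add (f g : Fin a →₀ ℕ) :
    ((f + g).sum fun _ n => n) = (f.sum fun _ n => n) + g.sum fun _ n => n :=
  Finsupp.sum_add_index' (by simp) (by intros; rfl)

lemma single_add_sub (j : Fin a) (e : Fin a →₀ ℕ) (hj : e j ≠ 0) :
    Finsupp.single j 1 + (e - Finsupp.single j 1) = e := by
  ext x
  rcases eq_or_ne x j with rfl | hx
  · simp [Finsupp.single_apply, Finsupp.tsub_apply]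
    omega
  · simp [Finsupp.single_apply, Ne.symm hx]

lemma coeff_ne_zero_elim (M : Matrix (Fin a) (Fin a) ℂ) (i : Fin a)
    (P : MvPolynomial (Fin a) ℂ) (e : Fin a →₀ ℕ)
    (h : coeff e (LF M i * P) ≠ 0) :
    ∃ j : Fin a, M i j ≠ 0 ∧ e j ≠ 0 ∧ coeff (e - Finsupp.single j 1) P ≠ 0 ∧
      M i j * coeff (e - Finsupp.single j 1) P ≠ 0 := by
  rw [LF, Finset.sum_mul] at h
  simp_rw [smul_mul_assoc] at h
  rw [coeff_sum] at h
  obtain ⟨j, -, hj⟩ := Finset.exists_ne_zero_of_sum_ne_zero h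
  rw [coeff_smul, smul_eq_mul, coeff_X_mul'] at hj
  by_cases hjs : j ∈ e.support
  · rw [if_pos hjs] at hj
    have hjne := Finsupp.mem_support_iff.mp hjs
    exact ⟨j, fun h0 => hj (by rw [h0, zero_mul]), hjne,
      fun h0 => hj (by rw [h0, mul_zero]), hj⟩
  · rw [if_neg hjs, mul_zero] at hj; exact absurd rfl hj

/-- homogeneity -/
lemma coeff_prod_degree (M : Matrix (Fin a) (Fin a) ℂ) (s : Multiset (Fin a))
    (e : Fin a →₀ ℕ) (h : coeff e ((s.map (LF M)).prod) ≠ 0) :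
    (e.sum fun _ n => n) = Multiset.card s := by
  induction s using Multiset.induction generalizing e with
  | empty =>
    simp only [Multiset.map_zero, Multiset.prod_zero, coeff_one] at h
    split_ifs at h with h0
    · simp [← h0]
    · exact absurd rfl h
  | cons i s ih =>
    rw [Multiset.map_cons, Multiset.prod_cons] at h
    obtain ⟨j, hMij, hej, hcoeff, -⟩ := coeff_ne_zero_elim M i _ e h
    have he := single_add_sub j e hej
    have := ih _ hcoeff
    rw [← he, degSum_add, this]
    simp [Finsupp.sum_single_index, add_comm]

lemma Wt_toFinsupp (b : Fin a → ℕ) (s : Multiset (Fin a)) :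
    Wt b (Multiset.toFinsupp s) = (s.map b).sum := by
  induction s using Multiset.induction with
  | empty => simp [Wt]
  | cons x t iht =>
    rw [toFinsupp_cons', Wt_add, Wt_single, Multiset.map_cons, Multiset.sum_cons, iht]

lemma key_triangular (b : Fin a → ℕ) (hb : Function.Injective b)
    (M : Matrix (Fin a) (Fin a) ℂ) (hM : ∀ i j, M i j ≠ 0 → b i ≤ b j)
    (s : Multiset (Fin a)) (e : Fin a →₀ ℕ)
    (h : coeff e ((s.map (LF M)).prod) ≠ 0) :
    (s.map b).sum ≤ Wt b e ∧ (Wt b e = (s.map b).sum → e = Multiset.toFinsupp s) := by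
  induction s using Multiset.induction generalizing e with
  | empty =>
    simp only [Multiset.map_zero, Multiset.prod_zero, coeff_one] at h
    split_ifs at h with h0
    · subst h0
      refine ⟨by simp [Wt], fun _ => by simp⟩
    · exact absurd rfl h
  | cons i s ih =>
    rw [Multiset.map_cons, Multiset.prod_cons] at h
    obtain ⟨j, hMij, hej, hcoeff, -⟩ := coeff_ne_zero_elim M i _ e h
    have he := single_add_sub j e hej
    obtain ⟨ihle, iheq⟩ := ih _ hcoeff
    have hbij := hM i j hMij
    have hWe : Wt b e = b j + Wt b (e - Finsupp.single j 1) := by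
      rw [← he, Wt_add, Wt_single, single_add_sub j e hej]
    constructor
    · rw [Multiset.map_cons, Multiset.sum_cons, hWe]
      omega
    · intro heq
      rw [Multiset.map_cons, Multiset.sum_cons] at heq
      have hbj : b j = b i := by omega
      have hWeq : Wt b (e - Finsupp.single j 1) = (s.map b).sum := by omega
      have hji : j = i := hb hbj
      rw [← he, iheq hWeq, hji, toFinsupp_cons']

lemma coeff_diag (b : Fin a → ℕ) (hb : Function.Injective b)
    (M : Matrix (Fin a) (Fin a) ℂ) (hM : ∀ i j, M i j ≠ 0 → b i ≤ b j)
    (s : Multiset (Fin a)) :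
    coeff (Multiset.toFinsupp s) ((s.map (LF M)).prod)
      = (s.map fun i => M i i).prod := by
  induction s using Multiset.induction with
  | empty => simp
  | cons i s ih =>
    rw [Multiset.map_cons, Multiset.prod_cons, Multiset.map_cons, Multiset.prod_cons, ← ih]
    rw [LF, Finset.sum_mul]
    simp_rw [smul_mul_assoc]
    rw [coeff_sum]
    rw [Finset.sum_eq_single i]
    · rw [coeff_smul, smul_eq_mul, toFinsupp_cons', coeff_X_mul]
    · intro j _ hji
      rw [coeff_smul, smul_eq_mul]
      by_cases hMij : M i j = 0
      · rw [hMij, zero_mul]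
      · rw [coeff_X_mul']
        split_ifs with hjs
        · -- show the remaining coefficient vanishes by weights
          by_contra hne
          have hc : coeff (Multiset.toFinsupp (i ::ₘ s) - Finsupp.single j 1)
              ((s.map (LF M)).prod) ≠ 0 := fun h0 => hne (by rw [h0, mul_zero])
          obtain ⟨hle, -⟩ := key_triangular b hb M hM s _ hc
          have hej : (Multiset.toFinsupp (i ::ₘ s)) j ≠ 0 := Finsupp.mem_support_iff.mp hjs
          have he := single_add_sub j (Multiset.toFinsupp (i ::ₘ s)) hej
          have hW1 : Wt b (Multiset.toFinsupp (i ::ₘ s))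
              = b j + Wt b (Multiset.toFinsupp (i ::ₘ s) - Finsupp.single j 1) := by
            rw [← he, Wt_add, Wt_single, he]
          have hW2 : Wt b (Multiset.toFinsupp (i ::ₘ s)) = b i + (s.map b).sum := by
            rw [toFinsupp_cons', Wt_add, Wt_single, Wt_toFinsupp]
          have hbij := hM i j hMij
          have : b i = b j := by omega
          exact hji (hb this.symm)
        · rw [mul_zero]
    · intro hi; exact absurd (Finset.mem_univ i) hi

lemma det_eq_prod_diag {n : Type*} [Fintype n] [DecidableEq n] (N : Matrix n n ℂ) (w : n → ℕ)
    (h : ∀ d c, N d c ≠ 0 → w c ≤ w d ∧ (w d = w c → d = c)) :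
    N.det = ∏ i, N i i := by
  rw [Matrix.det_apply, Finset.sum_eq_single (1 : Equiv.Perm n)]
  · simp
  · intro σ _ hσ
    by_cases hz : ∃ i, N (σ i) i = 0
    · obtain ⟨i, hi⟩ := hz
      have hp : ∏ j, N (σ j) j = 0 := Finset.prod_eq_zero (Finset.mem_univ i) hi
      rw [hp, smul_zero]
    · exfalso
      push_neg at hz
      have h1 : ∀ i ∈ Finset.univ, w i ≤ w (σ i) := fun i _ => (h _ _ (hz i)).1
      have h2 : ∑ i, w i = ∑ i, w (σ i) := (Equiv.sum_comp σ w).symm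
      have h3 := (Finset.sum_eq_sum_iff_of_le h1).1 h2
      exact hσ (Equiv.ext fun i => (h _ _ (hz i)).2 (h3 i (Finset.mem_univ i)).symm)
  · intro h1; exact absurd (Finset.mem_univ _) h1

lemma prod_map_univ (g : Fin a → ℂ) (s : Multiset (Fin a)) :
    (s.map g).prod = ∏ i : Fin a, g i ^ s.count i := by
  rw [Finset.prod_multiset_map_count]
  apply Finset.prod_subset (Finset.subset_univ _)
  intro x _ hx
  rw [Multiset.count_eq_zero_of_notMem (by simpa using hx), pow_zero]

lemma arith_choose (a k : ℕ) (ha : 0 < a) :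
    k * (a + k - 1).choose k = a * (a + k - 1).choose a := by
  cases k with
  | zero =>
    have : a - 1 < a := by omega
    simp [Nat.choose_eq_zero_of_lt this]
  | succ k =>
    have h1 : a + (k + 1) - 1 = a + k := by omega
    rw [h1]
    have h2 : (a + k).choose a = (a + k).choose k := by
      rw [← Nat.choose_symm (Nat.le_add_left k a)]
      congr 1
      omega
    rw [h2, mul_comm (k + 1) _, Nat.choose_succ_right_eq]
    have h3 : a + k - k = a := by omega
    rw [h3, mul_comm]

lemma sum_count_eq_card (s : Multiset (Fin a)) :
    ∑ i : Fin a, s.count i = Multiset.card s := by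
  rw [← Multiset.toFinset_sum_count_eq s]
  symm
  apply Finset.sum_subset (Finset.subset_univ _)
  intro x _ hx
  exact Multiset.count_eq_zero_of_notMem (by simpa using hx)

lemma sum_count_sym (i : Fin a) :
    ∑ c : Sym (Fin a) k, Multiset.count i c.1 = (a + k - 1).choose a := by
  have hsym : ∀ i' : Fin a,
      ∑ c : Sym (Fin a) k, Multiset.count i' c.1 = ∑ c : Sym (Fin a) k, Multiset.count i c.1 := by
    intro i'
    rw [← Equiv.sum_comp (Sym.equivCongr (Equiv.swap i i'))
      (fun c : Sym (Fin a) k => Multiset.count i' c.1)]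
    apply Finset.sum_congr rfl
    intro c _
    show Multiset.count i' (Multiset.map (Equiv.swap i i') c.1) = Multiset.count i c.1
    calc Multiset.count i' (Multiset.map (Equiv.swap i i') c.1)
        = Multiset.count (Equiv.swap i i' i) (Multiset.map (Equiv.swap i i') c.1) := by
          rw [Equiv.swap_apply_left]
      _ = Multiset.count i c.1 := Multiset.count_map_eq_count' _ _ (Equiv.injective _) _
  have htot : ∑ i' : Fin a, ∑ c : Sym (Fin a) k, Multiset.count i' c.1
      = (a + k - 1).choose k * k := by
    rw [Finset.sum_comm]
    have : ∀ c : Sym (Fin a) k, ∑ i' : Fin a, Multiset.count i' c.1 = k := by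
      intro c
      rw [sum_count_eq_card, c.2]
    rw [Finset.sum_congr rfl fun c _ => this c, Finset.sum_const, Finset.card_univ,
      Sym.card_sym_eq_choose, Fintype.card_fin, smul_eq_mul]
  have ha : 0 < a := i.pos
  have h4 : ∑ i' : Fin a, ∑ c : Sym (Fin a) k, Multiset.count i' c.1
      = a * ∑ c : Sym (Fin a) k, Multiset.count i c.1 := by
    rw [Finset.sum_congr rfl fun i' _ => hsym i', Finset.sum_const, Finset.card_univ,
      Fintype.card_fin, smul_eq_mul]
  have key : a * (∑ c : Sym (Fin a) k, Multiset.count i c.1)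
      = a * (a + k - 1).choose a := by
    rw [← h4, htot, mul_comm, arith_choose a k ha]
  exact Nat.eq_of_mul_eq_mul_left ha key

lemma symExp_injective : Function.Injective (symExp : Sym (Fin a) k → Fin a →₀ ℕ) :=
  fun x y h => Subtype.ext (Multiset.toFinsupp.injective h)

lemma symPowMatrix_apply (M : Matrix (Fin a) (Fin a) ℂ) (d c : Sym (Fin a) k) :
    symPowMatrix a k M d c = coeff (symExp d) ((c.1.map (LF M)).prod) := by
  rw [symPowMatrix]
  congr 1
  exact aeval_monomial_eq M c.1

lemma symExp_sum (c : Sym (Fin a) k) : ((symExp c).sum fun _ n => n) = k := by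
  have h := Finsupp.card_toMultiset (symExp c)
  rw [symExp, Multiset.toFinsupp_toMultiset, c.2] at h
  exact h.symm

/-- `Sym` element from a multi-index of total degree `k`. -/
noncomputable def symOf (e : Fin a →₀ ℕ) (he : (e.sum fun _ n => n) = k) : Sym (Fin a) k :=
  ⟨e.toMultiset, by rw [Finsupp.card_toMultiset]; exact he⟩

lemma symExp_symOf (e : Fin a →₀ ℕ) (he : (e.sum fun _ n => n) = k) :
    symExp (symOf e he) = e := by
  rw [symExp, symOf]
  exact Finsupp.toMultiset_toFinsupp e

lemma prod_X_multiset (s : Multiset (Fin a)) :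
    (s.map (X : Fin a → MvPolynomial (Fin a) ℂ)).prod = monomial (Multiset.toFinsupp s) 1 := by
  induction s using Multiset.induction with
  | empty => simp
  | cons i s ih =>
    rw [Multiset.map_cons, Multiset.prod_cons, ih, toFinsupp_cons', monomial_single_add, pow_one]

lemma symPow_one : symPowMatrix a k (1 : Matrix (Fin a) (Fin a) ℂ) = 1 := by
  ext d c
  rw [symPowMatrix_apply]
  have hLF1 : LF (1 : Matrix (Fin a) (Fin a) ℂ) = X := by
    funext i
    rw [LF, Finset.sum_eq_single i]
    · rw [Matrix.one_apply_eq, one_smul]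
    · intro j _ hji
      rw [Matrix.one_apply_ne (Ne.symm hji), zero_smul]
    · intro h; exact absurd (Finset.mem_univ _) h
  rw [hLF1, prod_X_multiset, coeff_monomial, Matrix.one_apply]
  by_cases h : d = c
  · subst h
    show (if symExp d = symExp d then (1 : ℂ) else 0) = if d = d then (1 : ℂ) else 0
    rw [if_pos rfl, if_pos rfl]
  · show (if symExp c = symExp d then (1 : ℂ) else 0) = if d = c then (1 : ℂ) else 0
    rw [if_neg (fun hh => h (symExp_injective hh).symm), if_neg h]

lemma aeval_monomial_eqC (M : Matrix (Fin a) (Fin a) ℂ) (s : Multiset (Fin a)) :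
    (MvPolynomial.aeval fun i : Fin a => ∑ j : Fin a, M i j • (X j : MvPolynomial (Fin a) ℂ))
      (monomial (Multiset.toFinsupp s) (1 : ℂ)) = (s.map (LF M)).prod := by
  induction s using Multiset.induction with
  | empty => simp
  | cons i s ih =>
    rw [toFinsupp_cons', monomial_single_add, pow_one, map_mul, aeval_X,
      Multiset.map_cons, Multiset.prod_cons, ih, LF]

lemma symPow_mul (M N : Matrix (Fin a) (Fin a) ℂ) :
    symPowMatrix a k (N * M) = symPowMatrix a k M * symPowMatrix a k N := by
  ext d c
  rw [Matrix.mul_apply]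
  simp only [symPowMatrix_apply]
  have hLF : ∀ x : Fin a,
      (aeval fun i : Fin a => ∑ j : Fin a, M i j • (X j : MvPolynomial (Fin a) ℂ)) (LF N x)
        = LF (N * M) x := by
    intro x
    rw [LF, map_sum, LF]
    simp_rw [map_smul, aeval_X, Finset.smul_sum, smul_smul]
    rw [Finset.sum_comm]
    simp_rw [Matrix.mul_apply, Finset.sum_smul]
  have step1 : ((c.1.map (LF (N * M))).prod : MvPolynomial (Fin a) ℂ)
      = (aeval fun i : Fin a => ∑ j : Fin a, M i j • (X j : MvPolynomial (Fin a) ℂ))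
          ((c.1.map (LF N)).prod) := by
    rw [map_multiset_prod, Multiset.map_map]
    congr 1
    apply Multiset.map_congr rfl
    intro x _
    exact (hLF x).symm
  rw [step1]
  set q : MvPolynomial (Fin a) ℂ := (c.1.map (LF N)).prod with hq
  conv_lhs => rw [← support_sum_monomial_coeff q]
  rw [map_sum, coeff_sum]
  have hterm : ∀ v ∈ q.support,
      coeff (symExp d) ((aeval fun i : Fin a => ∑ j : Fin a, M i j •
          (X j : MvPolynomial (Fin a) ℂ)) (monomial v (coeff v q)))
        = coeff v q * coeff (symExp d) ((aeval fun i : Fin a => ∑ j : Fin a, M i j •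
          (X j : MvPolynomial (Fin a) ℂ)) (monomial v (1 : ℂ))) := by
    intro v _
    have h1 : monomial v (coeff v q) = (coeff v q) • monomial v (1 : ℂ) := by
      rw [smul_monomial, smul_eq_mul, mul_one]
    rw [h1, map_smul, coeff_smul, smul_eq_mul]
  rw [Finset.sum_congr rfl hterm]
  have hsub : q.support ⊆ Finset.univ.map
      (⟨symExp, symExp_injective⟩ : Sym (Fin a) k ↪ (Fin a →₀ ℕ)) := by
    intro v hv
    have hdeg : (v.sum fun _ n => n) = k := by
      have := coeff_prod_degree N c.1 v (mem_support_iff.mp hv)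
      rwa [c.2] at this
    rw [Finset.mem_map]
    exact ⟨symOf v hdeg, Finset.mem_univ _, symExp_symOf v hdeg⟩
  rw [Finset.sum_subset hsub (fun v _ hv => by
    rw [notMem_support_iff.mp hv, zero_mul]), Finset.sum_map]
  simp only [Function.Embedding.coeFn_mk]
  apply Finset.sum_congr rfl
  intro e _
  have h2 : (aeval fun i : Fin a => ∑ j : Fin a, M i j • (X j : MvPolynomial (Fin a) ℂ))
      (monomial (symExp e) (1 : ℂ)) = (e.1.map (LF M)).prod := aeval_monomial_eqC M e.1
  show coeff (symExp e) q * coeff (symExp d) _ = _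
  rw [h2, mul_comm]

theorem det_symPow_triangular (b : Fin a → ℕ) (hb : Function.Injective b)
    (M : Matrix (Fin a) (Fin a) ℂ) (hM : ∀ i j, M i j ≠ 0 → b i ≤ b j) :
    (symPowMatrix a k M).det = M.det ^ ((a + k - 1).choose a) := by
  have hdetM : M.det = ∏ i, M i i := by
    have ht := det_eq_prod_diag M.transpose b fun d c h =>
      ⟨hM c d (by simpa using h), fun he => hb he⟩
    rw [Matrix.det_transpose] at ht
    simpa using ht
  have htr : ∀ d c : Sym (Fin a) k, symPowMatrix a k M d c ≠ 0 →
      (c.1.map b).sum ≤ (d.1.map b).sum ∧ ((d.1.map b).sum = (c.1.map b).sum → d = c) := by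
    intro d c h
    rw [symPowMatrix_apply] at h
    obtain ⟨h1, h2⟩ := key_triangular b hb M hM c.1 (symExp d) h
    rw [show symExp d = Multiset.toFinsupp d.1 from rfl, Wt_toFinsupp] at h1 h2
    exact ⟨h1, fun he => symExp_injective (show symExp d = symExp c from h2 he)⟩
  rw [det_eq_prod_diag _ (fun c : Sym (Fin a) k => (c.1.map b).sum) htr]
  have hdiag : ∀ c : Sym (Fin a) k,
      symPowMatrix a k M c c = (c.1.map fun i => M i i).prod := by
    intro c
    rw [symPowMatrix_apply]
    exact coeff_diag b hb M hM c.1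
  calc ∏ c : Sym (Fin a) k, symPowMatrix a k M c c
      = ∏ c : Sym (Fin a) k, ∏ i : Fin a, (M i i) ^ (c.1.count i) := by
        apply Finset.prod_congr rfl
        intro c _
        rw [hdiag c, prod_map_univ]
    _ = ∏ i : Fin a, ∏ c : Sym (Fin a) k, (M i i) ^ (c.1.count i) := Finset.prod_comm
    _ = ∏ i : Fin a, (M i i) ^ (∑ c : Sym (Fin a) k, c.1.count i) := by
        apply Finset.prod_congr rfl
        intro i _
        rw [Finset.prod_pow_eq_pow_sum]
    _ = ∏ i : Fin a, (M i i) ^ ((a + k - 1).choose a) := by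
        apply Finset.prod_congr rfl
        intro i _
        rw [sum_count_sym i]
    _ = (∏ i, M i i) ^ ((a + k - 1).choose a) := by rw [Finset.prod_pow]
    _ = M.det ^ ((a + k - 1).choose a) := by rw [hdetM]

end SymPowAux

open MvPolynomial in
/-- for an endomorphism `f` of an `a`-dimensional space, the induced
endomorphism `S^k f` of the `k`-th symmetric power satisfies
`det (S^k f) = (det f)^{binom(a+k-1, a)}`. -/
theorem stmt_8 (a k : ℕ) (M : Matrix (Fin a) (Fin a) ℂ) :
    (symPowMatrix a k M).det = M.det ^ Nat.choose (a + k - 1) a := by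
  apply Matrix.diagonal_transvection_induction
    (P := fun N => (symPowMatrix a k N).det = N.det ^ Nat.choose (a + k - 1) a)
  · intro D _
    apply det_symPow_triangular (fun x : Fin a => (x : ℕ)) Fin.val_injective
    intro i j h
    by_cases hij : i = j
    · subst hij; exact le_rfl
    · exact absurd (Matrix.diagonal_apply_ne D hij) h
  · intro t
    obtain ⟨i, j, hij, c⟩ := t
    rw [Matrix.TransvectionStruct.toMatrix_mk]
    have hbinj : Function.Injective
        (fun x : Fin a => if x = i then 0 else if x = j then a + 1 else (x : ℕ) + 1) := by
      intro x y hxy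
      have hxa := x.isLt
      have hya := y.isLt
      simp only at hxy
      split_ifs at hxy <;> first | (apply Fin.ext; omega) | simp_all
    apply det_symPow_triangular _ hbinj
    intro x y h
    by_cases hxy : x = y
    · subst hxy; exact le_rfl
    · have hstd : i = x ∧ j = y := by
        by_contra hc
        apply h
        rw [Matrix.transvection, Matrix.add_apply, Matrix.one_apply_ne hxy,
          Matrix.single_apply_of_ne (h := hc), add_zero]
      obtain ⟨rfl, rfl⟩ := hstd
      simp only [if_pos rfl]
      exact Nat.zero_le _
  · intro A B hA hB
    rw [symPow_mul B A, Matrix.det_mul, hA, hB, Matrix.det_mul, mul_pow, mul_comm]
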